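/- Suppose f : ℝ^d → ℝ is twice continuously differentiable, L-smooth, σ-strongly convex, and has γ-Lipschitz Hessian, with minimizer μ*. Let (μ̂*, Σ̂*) be a minimizer of Q_α over ℝ^d × S. Then f(μ̂*) − f(μ*) ≤ dLα²/τ + γα³(d+3)^{3/2}/(3τ^{3/2}) + (dα²/2)·(τ^{-1} − ζ^{-1}), and ‖μ* − μ̂*‖² ≤ 2dLα²/(στ) + 2γα³(d+3)^{3/2}/(3στ^{3/2}) + (dα²/σ)·(τ^{-1} − ζ^{-1}). -/

import Mathlib

open MeasureTheory ProbabilityTheory Matrix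
open scoped BigOperators RealInnerProductSpace ENNReal NNReal
open Real Set Filter Topology

set_option maxHeartbeats 1000000
noncomputable section

abbrev Vec (d : ℕ) := EuclideanSpace ℝ (Fin d)
abbrev Mat (d : ℕ) := Matrix (Fin d) (Fin d) ℝ

/-- View a Euclidean vector as a plain function. -/
def toPi {d : ℕ} (u : Vec d) : Fin d → ℝ := u
/-- View a plain function as a Euclidean vector. -/
def ofPi {d : ℕ} (u : Fin d → ℝ) : Vec d := WithLp.toLp 2 u

/-- Matrix-vector multiplication on Euclidean space. -/
def mvec {d : ℕ} (A : Mat d) (u : Vec d) : Vec d := ofPi (A.mulVec (toPi u))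

/-- The standard Gaussian measure N(0, I_d) on ℝ^d. -/
def gaussD (d : ℕ) : Measure (Vec d) :=
  (Measure.pi fun _ : Fin d => gaussianReal 0 1).map (MeasurableEquiv.toLp 2 (Fin d → ℝ))

/-- Frobenius norm of a matrix. -/
def matFrobNorm {m n : ℕ} (A : Matrix (Fin m) (Fin n) ℝ) : ℝ :=
  Real.sqrt (∑ i, ∑ j, (A i j) ^ 2)

/-- Operator (spectral) norm of a matrix. -/
def matOpNorm {m n : ℕ} (A : Matrix (Fin m) (Fin n) ℝ) : ℝ :=
  ‖LinearMap.toContinuousLinearMap (Matrix.toEuclideanLin A)‖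

/-- Loewner order `A ⪯ B`. -/
def loeLE {d : ℕ} (A B : Mat d) : Prop := (B - A).PosSemidef

/-- Hessian matrix of `f` at `x`. -/
def hess {d : ℕ} (f : Vec d → ℝ) (x : Vec d) : Mat d :=
  Matrix.of fun i j =>
    iteratedFDeriv ℝ 2 f x ![EuclideanSpace.single i 1, EuclideanSpace.single j 1]

/-- Membership in `S = {Σ symmetric : ζ⁻¹ I ⪯ Σ ⪯ τ⁻¹ I}`. -/
def Smem {d : ℕ} (τ ζ : ℝ) (A : Mat d) : Prop :=
  A.IsSymm ∧ loeLE (ζ⁻¹ • 1) A ∧ loeLE A (τ⁻¹ • 1)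

/-- Membership in `S' = {A symmetric : τ I ⪯ A ⪯ ζ I}`. -/
def S'mem {d : ℕ} (τ ζ : ℝ) (A : Mat d) : Prop :=
  A.IsSymm ∧ loeLE (τ • 1) A ∧ loeLE A (ζ • 1)

/-- The square root of a positive semidefinite matrix (Mathlib's former `Matrix.PosSemidef.sqrt`). -/
noncomputable def Matrix.PosSemidef.sqrt {n : Type*} [Fintype n] [DecidableEq n]
    {A : Matrix n n ℝ} (hA : A.PosSemidef) : Matrix n n ℝ :=
  hA.1.eigenvectorUnitary.1 * diagonal ((√·) ∘ hA.1.eigenvalues) *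
    (star hA.1.eigenvectorUnitary : Matrix n n ℝ)

/-- The regularized reparameterized objective `Q_α(μ, Σ)`. -/
def Qa {d : ℕ} (f : Vec d → ℝ) (α : ℝ) (μ : Vec d) (S : Mat d) (hS : S.PosSemidef) : ℝ :=
  (∫ u, f (μ + α • mvec hS.sqrt u) ∂ gaussD d) - α ^ 2 / 2 * Real.log S.det

lemma gauss1_eq : gaussianReal 0 1 =
    volume.withDensity (fun x => ((gaussianPDFReal 0 1 x).toNNReal : ℝ≥0∞)) := by
  rw [gaussianReal_of_var_ne_zero _ one_ne_zero]
  rfl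

lemma pdf01 (x : ℝ) : gaussianPDFReal 0 1 x = (Real.sqrt (2 * π))⁻¹ * Real.exp (-(1/2) * x ^ 2) := by
  simp only [gaussianPDFReal, NNReal.coe_one, mul_one, sub_zero]
  congr 1
  ring

lemma integral_gauss1 (g : ℝ → ℝ) :
    ∫ x, g x ∂(gaussianReal 0 1) = ∫ x, gaussianPDFReal 0 1 x * g x := by
  rw [gauss1_eq, integral_withDensity_eq_integral_smul ((measurable_gaussianPDFReal 0 1).real_toNNReal) g]
  congr 1; ext x
  simp [NNReal.smul_def, Real.coe_toNNReal _ (gaussianPDFReal_nonneg 0 1 x)]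

lemma integrable_gauss1_iff (g : ℝ → ℝ) :
    Integrable g (gaussianReal 0 1) ↔ Integrable (fun x => gaussianPDFReal 0 1 x * g x) := by
  rw [gauss1_eq, integrable_withDensity_iff_integrable_smul ((measurable_gaussianPDFReal 0 1).real_toNNReal)]
  constructor <;> intro h <;>
  · refine h.congr ?_
    filter_upwards with x
    simp [NNReal.smul_def, Real.coe_toNNReal _ (gaussianPDFReal_nonneg 0 1 x)]


lemma hasDeriv_negexp (x : ℝ) :
    HasDerivAt (fun x : ℝ => Real.exp (-(1/2) * x ^ 2)) (-x * Real.exp (-(1/2) * x ^ 2)) x := by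
  have h1 : HasDerivAt (fun x : ℝ => -(1/2) * x ^ 2) (-x) x := by
    have := (hasDerivAt_pow 2 x).const_mul (-(1/2) : ℝ)
    exact this.congr_deriv (by push_cast; ring)
  have := h1.exp
  convert this using 1; ring

lemma hasDeriv_F (x : ℝ) :
    HasDerivAt (fun x : ℝ => -(x * Real.exp (-(1/2) * x ^ 2)))
      ((x ^ 2 - 1) * Real.exp (-(1/2) * x ^ 2)) x := by
  have h := ((hasDerivAt_id x).mul (hasDeriv_negexp x)).neg
  exact h.congr_deriv (by simp only [id]; ring)

lemma integrable_x2_exp : Integrable (fun x : ℝ => x ^ 2 * Real.exp (-(1/2) * x ^ 2)) := by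
  have := integrable_rpow_mul_exp_neg_mul_sq (b := 1/2) (by norm_num) (s := 2) (by norm_num)
  refine this.congr ?_
  filter_upwards with x
  rw [show ((2:ℝ) = ((2:ℕ):ℝ)) by norm_num, Real.rpow_natCast]

lemma integrable_x_exp : Integrable (fun x : ℝ => x * Real.exp (-(1/2) * x ^ 2)) :=
  integrable_mul_exp_neg_mul_sq (by norm_num)

lemma integrable_exp_half : Integrable (fun x : ℝ => Real.exp (-(1/2) * x ^ 2)) :=
  integrable_exp_neg_mul_sq (by norm_num)

lemma tendsto_F_atTop : Tendsto (fun x : ℝ => -(x * Real.exp (-(1/2) * x ^ 2))) atTop (𝓝 0) := by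
  have h0 : Tendsto (fun x : ℝ => x * Real.exp (-(1/2) * x ^ 2)) atTop (𝓝 0) := by
    have hlo := rpow_mul_exp_neg_mul_sq_isLittleO_exp_neg (b := 1/2) (by norm_num) 1
    have h2 : Tendsto (fun x : ℝ => Real.exp (-(1/2) * x)) atTop (𝓝 0) := by
      have hm : Tendsto (fun x : ℝ => -(1/2) * x) atTop atBot := by
        apply Tendsto.const_mul_atTop_of_neg (by norm_num : (-(1/2):ℝ) < 0) tendsto_id
      exact Real.tendsto_exp_atBot.comp hm
    have := hlo.trans_tendsto h2
    refine this.congr' ?_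
    filter_upwards [eventually_ge_atTop (0:ℝ)] with x hx
    rw [Real.rpow_one]
  simpa using h0.neg

lemma tendsto_F_atBot : Tendsto (fun x : ℝ => -(x * Real.exp (-(1/2) * x ^ 2))) atBot (𝓝 0) := by
  have h := tendsto_F_atTop.comp tendsto_neg_atBot_atTop
  have : ((fun x : ℝ => -(x * Real.exp (-(1/2) * x ^ 2))) ∘ (fun x : ℝ => -x))
      = fun x : ℝ => (x * Real.exp (-(1/2) * x ^ 2)) := by
    ext x; simp
  rw [this] at h
  simpa using h.neg

/-- key: ∫ x^2 exp(-x²/2) = ∫ exp(-x²/2)  -/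
lemma integral_x2_exp_eq : ∫ x : ℝ, x ^ 2 * Real.exp (-(1/2) * x ^ 2)
    = ∫ x : ℝ, Real.exp (-(1/2) * x ^ 2) := by
  have hint : Integrable (fun x : ℝ => (x ^ 2 - 1) * Real.exp (-(1/2) * x ^ 2)) := by
    have := integrable_x2_exp.sub integrable_exp_half
    refine this.congr ?_; filter_upwards with x; simp only [Pi.sub_apply]; ring
  have hIoi : ∫ x in Ioi (0:ℝ), (x ^ 2 - 1) * Real.exp (-(1/2) * x ^ 2)
      = 0 - -(0 * Real.exp (-(1/2) * 0 ^ 2)) := by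
    refine integral_Ioi_of_hasDerivAt_of_tendsto ?_ (fun x _ => hasDeriv_F x)
      hint.integrableOn tendsto_F_atTop
    exact (Continuous.continuousWithinAt (by continuity))
  have hIic : ∫ x in Iic (0:ℝ), (x ^ 2 - 1) * Real.exp (-(1/2) * x ^ 2)
      = -(0 * Real.exp (-(1/2) * 0 ^ 2)) - 0 := by
    refine integral_Iic_of_hasDerivAt_of_tendsto ?_ (fun x _ => hasDeriv_F x)
      hint.integrableOn tendsto_F_atBot
    exact (Continuous.continuousWithinAt (by continuity))
  have hsplit : ∫ x : ℝ, (x ^ 2 - 1) * Real.exp (-(1/2) * x ^ 2) = 0 := by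
    rw [← setIntegral_univ, ← Iic_union_Ioi (a := (0:ℝ)), setIntegral_union (Iic_disjoint_Ioi le_rfl)
      measurableSet_Ioi hint.integrableOn hint.integrableOn, hIoi, hIic]
    simp
  have := integral_sub integrable_x2_exp integrable_exp_half
  have h2 : ∫ x : ℝ, (x ^ 2 - 1) * Real.exp (-(1/2) * x ^ 2)
      = (∫ x : ℝ, x ^ 2 * Real.exp (-(1/2) * x ^ 2)) - ∫ x : ℝ, Real.exp (-(1/2) * x ^ 2) := by
    rw [← this]; congr 1; ext x; ring
  rw [h2] at hsplit
  linarith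

lemma hasDeriv_G (x : ℝ) :
    HasDerivAt (fun x : ℝ => -(Real.exp (-(1/2) * x ^ 2))) (x * Real.exp (-(1/2) * x ^ 2)) x := by
  exact (hasDeriv_negexp x).neg.congr_deriv (by ring)

lemma integral_x_exp_eq : ∫ x : ℝ, x * Real.exp (-(1/2) * x ^ 2) = 0 := by
  have hIoi : ∫ x in Ioi (0:ℝ), x * Real.exp (-(1/2) * x ^ 2)
      = 0 - -(Real.exp (-(1/2) * (0:ℝ) ^ 2)) := by
    refine integral_Ioi_of_hasDerivAt_of_tendsto ?_
      (fun x _ => hasDeriv_G x)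
      integrable_x_exp.integrableOn ?_
    · exact (Continuous.continuousWithinAt (by continuity))
    · have := (Real.tendsto_exp_atBot.comp (Tendsto.const_mul_atTop_of_neg
        (by norm_num : (-(1/2):ℝ) < 0) (tendsto_pow_atTop (n := 2) (by norm_num)))).neg
      simpa [Function.comp_def] using this
  have hIic : ∫ x in Iic (0:ℝ), x * Real.exp (-(1/2) * x ^ 2)
      = -(Real.exp (-(1/2) * (0:ℝ) ^ 2)) - 0 := by
    refine integral_Iic_of_hasDerivAt_of_tendsto ?_
      (fun x _ => hasDeriv_G x)
      integrable_x_exp.integrableOn ?_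
    · exact (Continuous.continuousWithinAt (by continuity))
    · have hm : Tendsto (fun x : ℝ => -(1/2) * x ^ 2) atBot atBot := by
        have hp : Tendsto (fun x : ℝ => x ^ 2) atBot atTop := by
          have h2 := (tendsto_pow_atTop (α := ℝ) (n := 2) (by norm_num)).comp
            (tendsto_abs_atBot_atTop (G := ℝ))
          refine h2.congr fun x => ?_
          simp [Function.comp_def, sq_abs]
        exact Tendsto.const_mul_atTop_of_neg (by norm_num : (-(1/2):ℝ) < 0) hp
      have := (Real.tendsto_exp_atBot.comp hm).neg
      simpa [Function.comp_def] using this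
  rw [← setIntegral_univ, ← Iic_union_Ioi (a := (0:ℝ)), setIntegral_union (Iic_disjoint_Ioi le_rfl)
    measurableSet_Ioi integrable_x_exp.integrableOn integrable_x_exp.integrableOn, hIoi, hIic]
  simp


lemma sqrt_two_pi_pos : 0 < Real.sqrt (2 * π) := Real.sqrt_pos.2 (by positivity)

lemma integrable_id_gauss : Integrable (fun x : ℝ => x) (gaussianReal 0 1) := by
  rw [integrable_gauss1_iff]
  have := integrable_x_exp.const_mul (Real.sqrt (2 * π))⁻¹
  refine this.congr ?_
  filter_upwards with x
  rw [pdf01]; ring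

lemma integral_id_gauss : ∫ x, (x : ℝ) ∂(gaussianReal 0 1) = 0 := by
  rw [integral_gauss1]
  have h : (fun x : ℝ => gaussianPDFReal 0 1 x * x)
      = fun x : ℝ => (Real.sqrt (2 * π))⁻¹ * (x * Real.exp (-(1/2) * x ^ 2)) := by
    ext x; rw [pdf01]; ring
  rw [h, integral_const_mul, integral_x_exp_eq, mul_zero]

lemma integrable_sq_gauss : Integrable (fun x : ℝ => x ^ 2) (gaussianReal 0 1) := by
  rw [integrable_gauss1_iff]
  have := integrable_x2_exp.const_mul (Real.sqrt (2 * π))⁻¹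
  refine this.congr ?_
  filter_upwards with x
  rw [pdf01]; ring

lemma integral_sq_gauss : ∫ x, (x : ℝ) ^ 2 ∂(gaussianReal 0 1) = 1 := by
  rw [integral_gauss1]
  have h : (fun x : ℝ => gaussianPDFReal 0 1 x * x ^ 2)
      = fun x : ℝ => (Real.sqrt (2 * π))⁻¹ * (x ^ 2 * Real.exp (-(1/2) * x ^ 2)) := by
    ext x; rw [pdf01]; ring
  rw [h, integral_const_mul, integral_x2_exp_eq]
  have hg : ∫ x : ℝ, Real.exp (-(1/2) * x ^ 2) = Real.sqrt (2 * π) := by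
    have := integral_gaussian (1/2)
    rw [show (π / (1/2) : ℝ) = 2 * π by ring] at this
    simpa using this
  rw [hg, inv_mul_cancel₀ (ne_of_gt sqrt_two_pi_pos)]


instance gaussD_prob (d : ℕ) : IsProbabilityMeasure (gaussD d) := by
  unfold gaussD
  exact Measure.isProbabilityMeasure_map (MeasurableEquiv.measurable _).aemeasurable

lemma pi_map_eval {d : ℕ} (i : Fin d) :
    (Measure.pi fun _ : Fin d => gaussianReal 0 1).map (fun x => x i) = gaussianReal 0 1 := by
  refine Measure.ext fun s hs => ?_
  rw [Measure.map_apply (measurable_pi_apply i) hs]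
  rw [show (fun x : Fin d → ℝ => x i) ⁻¹' s
      = Set.pi univ (Function.update (fun _ => univ) i s) from Set.eval_preimage]
  rw [Measure.pi_pi]
  refine Finset.prod_eq_single_of_mem i (Finset.mem_univ i) ?_ |>.trans ?_
  · intro b _ hb
    simp [Function.update_of_ne hb]
  · simp

lemma integral_eval_gaussD {d : ℕ} (i : Fin d) (g : ℝ → ℝ)
    (hg : AEStronglyMeasurable g (gaussianReal 0 1)) :
    ∫ u, g (u i) ∂(gaussD d) = ∫ x, g x ∂(gaussianReal 0 1) := by
  unfold gaussD
  rw [MeasureTheory.integral_map_equiv]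
  show ∫ x : Fin d → ℝ, g (x i) ∂(Measure.pi fun _ => gaussianReal 0 1) = _
  have h := integral_map (μ := Measure.pi fun _ : Fin d => gaussianReal 0 1)
    (measurable_pi_apply i).aemeasurable (by rw [pi_map_eval i]; exact hg)
  rw [pi_map_eval i] at h
  exact h.symm

lemma integrable_eval_gaussD {d : ℕ} (i : Fin d) (g : ℝ → ℝ)
    (hg : AEStronglyMeasurable g (gaussianReal 0 1))
    (hgi : Integrable g (gaussianReal 0 1)) :
    Integrable (fun u : Vec d => g (u i)) (gaussD d) := by
  unfold gaussD
  rw [MeasureTheory.integrable_map_equiv]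
  show Integrable (fun x : Fin d → ℝ => g (x i)) (Measure.pi fun _ => gaussianReal 0 1)
  have := (integrable_map_measure (by rw [pi_map_eval i]; exact hg)
    (measurable_pi_apply i).aemeasurable).mp (by rw [pi_map_eval i]; exact hgi)
  exact this


lemma normsq_eq {d : ℕ} (u : Vec d) : ‖u‖ ^ 2 = ∑ i, (u i) ^ 2 := by
  rw [EuclideanSpace.norm_eq, Real.sq_sqrt (by positivity)]
  simp [sq_abs]

lemma integrable_coord {d : ℕ} (i : Fin d) :
    Integrable (fun u : Vec d => u i) (gaussD d) :=
  integrable_eval_gaussD i (fun x => x) aestronglyMeasurable_id integrable_id_gauss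

lemma integral_coord {d : ℕ} (i : Fin d) : ∫ u : Vec d, u i ∂(gaussD d) = 0 := by
  rw [integral_eval_gaussD i (fun x => x) aestronglyMeasurable_id, integral_id_gauss]

lemma integrable_coord_sq {d : ℕ} (i : Fin d) :
    Integrable (fun u : Vec d => (u i) ^ 2) (gaussD d) :=
  integrable_eval_gaussD i (fun x => x ^ 2)
    (measurable_id.pow_const 2).aestronglyMeasurable integrable_sq_gauss

lemma integral_coord_sq {d : ℕ} (i : Fin d) :
    ∫ u : Vec d, (u i) ^ 2 ∂(gaussD d) = 1 := by
  rw [integral_eval_gaussD i (fun x => x ^ 2)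
    (measurable_id.pow_const 2).aestronglyMeasurable, integral_sq_gauss]

lemma integrable_normsq {d : ℕ} : Integrable (fun u : Vec d => ‖u‖ ^ 2) (gaussD d) := by
  have h : Integrable (fun u : Vec d => ∑ i, (u i) ^ 2) (gaussD d) :=
    integrable_finset_sum _ (fun i _ => integrable_coord_sq i)
  exact h.congr (by filter_upwards with u; rw [normsq_eq])

lemma integral_normsq {d : ℕ} : ∫ u : Vec d, ‖u‖ ^ 2 ∂(gaussD d) = d := by
  have h : ∫ u : Vec d, ‖u‖ ^ 2 ∂(gaussD d) = ∫ u : Vec d, ∑ i, (u i) ^ 2 ∂(gaussD d) := by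
    congr 1; ext u; rw [normsq_eq]
  rw [h, integral_finset_sum _ (fun i _ => integrable_coord_sq i)]
  simp [integral_coord_sq]

lemma integrable_norm_gaussD {d : ℕ} : Integrable (fun u : Vec d => ‖u‖) (gaussD d) := by
  refine Integrable.mono' ((integrable_const (1:ℝ)).add integrable_normsq)
    (continuous_norm.aestronglyMeasurable) ?_
  filter_upwards with u
  rw [norm_norm]
  have h1 : ((fun _ : Vec d => (1:ℝ)) + fun u : Vec d => ‖u‖ ^ 2) u = 1 + ‖u‖ ^ 2 := rfl
  rw [h1]
  nlinarith [norm_nonneg u, sq_nonneg (‖u‖ - 1)]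

lemma integrable_linear {d : ℕ} (c : Fin d → ℝ) :
    Integrable (fun u : Vec d => ∑ j, c j * u j) (gaussD d) :=
  integrable_finset_sum _ (fun j _ => (integrable_coord j).const_mul (c j))

lemma integral_linear {d : ℕ} (c : Fin d → ℝ) :
    ∫ u : Vec d, ∑ j, c j * u j ∂(gaussD d) = 0 := by
  rw [integral_finset_sum _ (fun j _ => (integrable_coord j).const_mul (c j))]
  simp [integral_const_mul, integral_coord]


lemma psd_smul_one {d : ℕ} {c : ℝ} (hc : 0 ≤ c) : ((c • (1 : Mat d))).PosSemidef := by
  rw [smul_one_eq_diagonal]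
  exact Matrix.PosSemidef.diagonal (fun i => hc)


lemma dot_self_eigen {d : ℕ} {A : Mat d} (hA : A.IsHermitian) (j : Fin d) :
    ⇑(hA.eigenvectorBasis j) ⬝ᵥ ⇑(hA.eigenvectorBasis j) = 1 := by
  have hn := hA.eigenvectorBasis.orthonormal.1 j
  have h2 : ⇑(hA.eigenvectorBasis j) ⬝ᵥ ⇑(hA.eigenvectorBasis j)
      = @inner ℝ _ _ (hA.eigenvectorBasis j) (hA.eigenvectorBasis j) := by
    rw [PiLp.inner_apply]
    simp [dotProduct, mul_comm, sq]
  rw [h2, real_inner_self_eq_norm_sq, hn]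
  norm_num

lemma eigen_le {d : ℕ} {A : Mat d} (hA : A.IsHermitian) {c : ℝ}
    (h : (c • (1 : Mat d) - A).PosSemidef) (j : Fin d) : hA.eigenvalues j ≤ c := by
  set v : Fin d → ℝ := ⇑(hA.eigenvectorBasis j) with hv
  have key := h.dotProduct_mulVec_nonneg v
  have hmv : A *ᵥ v = hA.eigenvalues j • v := hA.mulVec_eigenvectorBasis j
  rw [sub_mulVec, smul_mulVec, one_mulVec, hmv] at key
  rw [dotProduct_sub, dotProduct_smul, dotProduct_smul] at key
  simp only [star_trivial, smul_eq_mul, hv, dot_self_eigen hA j, mul_one] at key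
  linarith

lemma eigen_ge {d : ℕ} {A : Mat d} (hA : A.IsHermitian) {c : ℝ}
    (h : (A - c • (1 : Mat d)).PosSemidef) (j : Fin d) : c ≤ hA.eigenvalues j := by
  set v : Fin d → ℝ := ⇑(hA.eigenvectorBasis j) with hv
  have key := h.dotProduct_mulVec_nonneg v
  have hmv : A *ᵥ v = hA.eigenvalues j • v := hA.mulVec_eigenvectorBasis j
  rw [sub_mulVec, smul_mulVec, one_mulVec, hmv] at key
  rw [dotProduct_sub, dotProduct_smul, dotProduct_smul] at key
  simp only [star_trivial, smul_eq_mul, hv, dot_self_eigen hA j, mul_one] at key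
  linarith

lemma det_bounds {d : ℕ} {A : Mat d} (hA : A.IsHermitian) {a b : ℝ} (ha : 0 < a)
    (h1 : (A - a • (1 : Mat d)).PosSemidef) (h2 : (b • (1 : Mat d) - A).PosSemidef) :
    0 < A.det ∧ A.det ≤ b ^ d := by
  have hdet : A.det = ∏ j, hA.eigenvalues j := by
    rw [hA.det_eq_prod_eigenvalues]
    norm_num
  have hge : ∀ j, a ≤ hA.eigenvalues j := eigen_ge hA h1
  have hle : ∀ j, hA.eigenvalues j ≤ b := eigen_le hA h2
  constructor
  · rw [hdet]
    exact Finset.prod_pos (fun j _ => lt_of_lt_of_le ha (hge j))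
  · rw [hdet]
    calc ∏ j, hA.eigenvalues j ≤ ∏ _j : Fin d, b :=
          Finset.prod_le_prod (fun j _ => le_of_lt (lt_of_lt_of_le ha (hge j)))
            (fun j _ => hle j)
      _ = b ^ d := by simp

lemma sqrt_smul_one {d : ℕ} {c : ℝ} (hc : 0 ≤ c) (h : ((c • (1 : Mat d))).PosSemidef) :
    h.sqrt = Real.sqrt c • (1 : Mat d) := by
  have h0 : (c • (1 : Mat d) - c • (1 : Mat d)).PosSemidef := by
    rw [sub_self]; exact PosSemidef.zero
  have hev : ∀ j, h.1.eigenvalues j = c := fun j =>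
    le_antisymm (eigen_le h.1 h0 j) (eigen_ge h.1 h0 j)
  unfold Matrix.PosSemidef.sqrt
  have hd : diagonal ((√·) ∘ h.1.eigenvalues) = Real.sqrt c • (1 : Mat d) := by
    rw [show Real.sqrt c • (1 : Mat d) = Matrix.diagonal (fun _ => Real.sqrt c) from (smul_one_eq_diagonal _ : _ = Matrix.diagonal _)]; congr 1; ext j; simp [hev j]
  rw [hd, Matrix.mul_smul, Matrix.mul_one, Matrix.smul_mul]
  congr 1
  exact Unitary.mul_star_self_of_mem h.1.eigenvectorUnitary.2

lemma mvec_smul_one {d : ℕ} (c : ℝ) (u : Vec d) : mvec (c • (1 : Mat d)) u = c • u := by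
  unfold mvec ofPi toPi
  rw [smul_mulVec, one_mulVec]
  rfl

lemma det_smul_one {d : ℕ} (c : ℝ) : (c • (1 : Mat d)).det = c ^ d := by
  rw [Matrix.det_smul, Matrix.det_one]
  simp


lemma fderiv_eq_toDual {d : ℕ} {f : Vec d → ℝ} (hf : ContDiff ℝ 2 f) (x : Vec d) :
    fderiv ℝ f x = InnerProductSpace.toDual ℝ (Vec d) (gradient f x) := by
  have hd : DifferentiableAt ℝ f x := (hf.differentiable (by norm_num)).differentiableAt
  exact (hasGradientAt_iff_hasFDerivAt.1 hd.hasGradientAt).fderiv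

lemma quad_upper {d : ℕ} {f : Vec d → ℝ} (hf : ContDiff ℝ 2 f) {L : ℝ} (hL0 : 0 ≤ L)
    (hL : ∀ x y : Vec d, ‖gradient f x - gradient f y‖ ≤ L * ‖x - y‖)
    (x y : Vec d) : f x ≤ f y + ⟪gradient f y, x - y⟫ + L * ‖x - y‖ ^ 2 := by
  have hdiff : ∀ z ∈ segment ℝ y x, DifferentiableAt ℝ f z :=
    fun z _ => (hf.differentiable (by norm_num)).differentiableAt
  have hbound : ∀ z ∈ segment ℝ y x,
      ‖fderiv ℝ f z - fderiv ℝ f y‖ ≤ L * ‖x - y‖ := by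
    intro z hz
    rw [segment_eq_image'] at hz
    obtain ⟨t, ht, rfl⟩ := hz
    rw [fderiv_eq_toDual hf, fderiv_eq_toDual hf, ← map_sub,
      LinearIsometryEquiv.norm_map]
    calc ‖gradient f (y + t • (x - y)) - gradient f y‖
        ≤ L * ‖(y + t • (x - y)) - y‖ := hL _ _
      _ = L * (t * ‖x - y‖) := by
          rw [add_sub_cancel_left, norm_smul, Real.norm_eq_abs, abs_of_nonneg ht.1]
      _ ≤ L * ‖x - y‖ := by
          nlinarith [mul_nonneg (mul_nonneg hL0 (sub_nonneg.2 ht.2)) (norm_nonneg (x - y))]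
  have key := Convex.norm_image_sub_le_of_norm_fderiv_le' hdiff hbound
    (convex_segment y x) (left_mem_segment ℝ y x) (right_mem_segment ℝ y x)
  rw [fderiv_eq_toDual hf, InnerProductSpace.toDual_apply_apply] at key
  have h1 : f x - f y - ⟪gradient f y, x - y⟫ ≤ L * ‖x - y‖ * ‖x - y‖ :=
    le_trans (le_abs_self _) key
  nlinarith [sq_nonneg (‖x - y‖)]

lemma grad_min_zero {d : ℕ} {f : Vec d → ℝ} (μstar : Vec d) (hf : ContDiff ℝ 2 f)
    (hμstar : ∀ z, f μstar ≤ f z) : gradient f μstar = 0 := by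
  have hloc : IsLocalMin f μstar := Filter.Eventually.of_forall hμstar
  have hfd : fderiv ℝ f μstar = 0 :=
    hloc.fderiv_eq_zero
  have := fderiv_eq_toDual hf μstar
  rw [hfd] at this
  have h2 := congrArg (InnerProductSpace.toDual ℝ (Vec d)).symm this.symm
  exact (InnerProductSpace.toDual ℝ (Vec d)).injective (by rw [← this, map_zero])

lemma inner_mvec {d : ℕ} (w : Vec d) (M : Mat d) (u : Vec d) :
    ⟪w, mvec M u⟫ = ∑ j, (∑ i, w i * M i j) * u j := by
  simp only [PiLp.inner_apply, RCLike.inner_apply, conj_trivial]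
  show ∑ i, (M.mulVec (toPi u)) i * w i = _
  simp only [mulVec, dotProduct, toPi, Finset.sum_mul]
  rw [Finset.sum_comm]
  refine Finset.sum_congr rfl fun j _ => ?_
  refine Finset.sum_congr rfl fun i _ => ?_
  ring

lemma mvec_norm_le {d : ℕ} (M : Mat d) (u : Vec d) : ‖mvec M u‖ ≤ matOpNorm M * ‖u‖ := by
  have h : mvec M u = (LinearMap.toContinuousLinearMap (Matrix.toEuclideanLin M)) u := rfl
  rw [h]
  exact (LinearMap.toContinuousLinearMap (Matrix.toEuclideanLin M)).le_opNorm u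

lemma mvec_continuous {d : ℕ} (M : Mat d) : Continuous (fun u : Vec d => mvec M u) := by
  have h : (fun u : Vec d => mvec M u)
      = ⇑(LinearMap.toContinuousLinearMap (Matrix.toEuclideanLin M)) := rfl
  rw [h]
  exact (LinearMap.toContinuousLinearMap (Matrix.toEuclideanLin M)).continuous

/-- the `μ`-part `μ̂*` of a minimizer of `Q_α` over `ℝ^d × S` is close
to the minimizer `μ*` of `f`, both in function value and in distance. -/
theorem stmt2 {d : ℕ} (hd : 1 ≤ d) (τ ζ α L σ γ : ℝ)
    (hτ : 0 < τ) (hτζ : τ ≤ ζ) (hα : 0 < α) (hL0 : 0 < L) (hσ0 : 0 < σ) (hγ0 : 0 ≤ γ)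
    (f : Vec d → ℝ) (hf : ContDiff ℝ 2 f)
    (hL : ∀ x y : Vec d, ‖gradient f x - gradient f y‖ ≤ L * ‖x - y‖)
    (hσ : ∀ x y : Vec d, f x - f y ≥ ⟪gradient f y, x - y⟫ + σ / 2 * ‖x - y‖ ^ 2)
    (hγ : ∀ x y : Vec d, matOpNorm (hess f x - hess f y) ≤ γ * ‖x - y‖)
    (μstar : Vec d) (hμstar : ∀ z, f μstar ≤ f z)
    (μhat : Vec d) (Shat : Mat d) (hShatMem : Smem τ ζ Shat) (hShatPsd : Shat.PosSemidef)
    (hmin : ∀ (μ : Vec d) (S : Mat d) (hSmem : Smem τ ζ S) (hSpsd : S.PosSemidef),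
      Qa f α μhat Shat hShatPsd ≤ Qa f α μ S hSpsd) :
    f μhat - f μstar
        ≤ (d : ℝ) * L * α ^ 2 / τ + γ * α ^ 3 * ((d : ℝ) + 3) ^ (3 / 2 : ℝ) / (3 * τ ^ (3 / 2 : ℝ))
          + (d : ℝ) * α ^ 2 / 2 * (τ⁻¹ - ζ⁻¹) ∧
    ‖μstar - μhat‖ ^ 2
        ≤ 2 * (d : ℝ) * L * α ^ 2 / (σ * τ)
          + 2 * γ * α ^ 3 * ((d : ℝ) + 3) ^ (3 / 2 : ℝ) / (3 * σ * τ ^ (3 / 2 : ℝ))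
          + (d : ℝ) * α ^ 2 / σ * (τ⁻¹ - ζ⁻¹) := by
    classical
  have hζ0 : 0 < ζ := lt_of_lt_of_le hτ hτζ
  have hτinv : (0:ℝ) < τ⁻¹ := inv_pos.2 hτ
  have hζinv : (0:ℝ) < ζ⁻¹ := inv_pos.2 hζ0
  have hinv : ζ⁻¹ ≤ τ⁻¹ := by
    rw [inv_le_inv₀ hζ0 hτ]
    exact hτζ
  have hS₀psd : (τ⁻¹ • (1 : Mat d)).PosSemidef := psd_smul_one hτinv.le
  have hS₀mem : Smem τ ζ (τ⁻¹ • (1 : Mat d)) := by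
    refine ⟨?_, ?_, ?_⟩
    · show ((τ⁻¹ • (1 : Mat d))).IsSymm
      rw [Matrix.IsSymm, Matrix.transpose_smul, Matrix.transpose_one]
    · show ((τ⁻¹ • (1 : Mat d)) - ζ⁻¹ • 1).PosSemidef
      rw [← sub_smul]
      exact psd_smul_one (by linarith)
    · show ((τ⁻¹ • (1 : Mat d)) - τ⁻¹ • (1 : Mat d)).PosSemidef
      rw [sub_self]
      have h0 := psd_smul_one (d := d) (le_refl (0:ℝ))
      rwa [zero_smul] at h0
  have hsqrt : hS₀psd.sqrt = Real.sqrt τ⁻¹ • (1 : Mat d) := sqrt_smul_one hτinv.le _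
  have hgrad0 : gradient f μstar = 0 := grad_min_zero μstar hf hμstar
  have harg : ∀ u : Vec d, μstar + α • mvec hS₀psd.sqrt u
      = μstar + (α * Real.sqrt τ⁻¹) • u := by
    intro u; rw [hsqrt, mvec_smul_one, smul_smul]
  -- pointwise upper bound at μstar
  have hpt : ∀ u : Vec d, f (μstar + α • mvec hS₀psd.sqrt u)
      ≤ f μstar + (L * α ^ 2 * τ⁻¹) * ‖u‖ ^ 2 := by
    intro u
    rw [harg u]
    have h := quad_upper hf hL0.le hL (μstar + (α * Real.sqrt τ⁻¹) • u) μstar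
    rw [hgrad0, add_sub_cancel_left] at h
    rw [inner_zero_left, norm_smul] at h
    have hval : ‖α * Real.sqrt τ⁻¹‖ ^ 2 = α ^ 2 * τ⁻¹ := by
      rw [Real.norm_eq_abs, sq_abs, mul_pow, Real.sq_sqrt hτinv.le]
    have hval2 : L * (‖α * Real.sqrt τ⁻¹‖ * ‖u‖) ^ 2 = L * α ^ 2 * τ⁻¹ * ‖u‖ ^ 2 := by
      rw [mul_pow, hval]; ring
    linarith [h, hval2.le, hval2.ge]
  have hptlow : ∀ u : Vec d, f μstar ≤ f (μstar + α • mvec hS₀psd.sqrt u) :=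
    fun u => hμstar _
  have hmeas_star : AEStronglyMeasurable
      (fun u : Vec d => f (μstar + α • mvec hS₀psd.sqrt u)) (gaussD d) := by
    refine (hf.continuous.comp ?_).aestronglyMeasurable
    exact continuous_const.add ((mvec_continuous _).const_smul α)
  have hKst : (0:ℝ) ≤ L * α ^ 2 * τ⁻¹ := by positivity
  have hint_star : Integrable
      (fun u : Vec d => f (μstar + α • mvec hS₀psd.sqrt u)) (gaussD d) := by
    refine Integrable.mono' ((integrable_const |f μstar|).add
      (integrable_normsq.const_mul (L * α ^ 2 * τ⁻¹))) hmeas_star ?_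
    filter_upwards with u
    have h1 := hpt u; have h2 := hptlow u
    have hfx : ((fun _ : Vec d => |f μstar|) + fun u : Vec d =>
        (L * α ^ 2 * τ⁻¹) * ‖u‖ ^ 2) u = |f μstar| + (L * α ^ 2 * τ⁻¹) * ‖u‖ ^ 2 := rfl
    rw [Real.norm_eq_abs, hfx, abs_le]
    constructor
    · nlinarith [neg_abs_le (f μstar), sq_nonneg ‖u‖, mul_nonneg hKst (sq_nonneg ‖u‖)]
    · nlinarith [le_abs_self (f μstar)]
  have hIstar : (∫ u, f (μstar + α • mvec hS₀psd.sqrt u) ∂gaussD d)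
      ≤ f μstar + (L * α ^ 2 * τ⁻¹) * d := by
    have hmono := integral_mono hint_star
      ((integrable_const (f μstar)).add (integrable_normsq.const_mul (L * α ^ 2 * τ⁻¹)))
      (fun u => hpt u)
    simp only [Pi.add_apply] at hmono
    rw [integral_add (integrable_const _) (integrable_normsq.const_mul _), integral_const,
      integral_const_mul, integral_normsq] at hmono
    simpa [measure_univ] using hmono
  -- Jensen at μhat
  have hptJ : ∀ u : Vec d, f μhat
      + ∑ j, (α * ∑ i, gradient f μhat i * hShatPsd.sqrt i j) * u j
      ≤ f (μhat + α • mvec hShatPsd.sqrt u) := by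
    intro u
    have h := hσ (μhat + α • mvec hShatPsd.sqrt u) μhat
    rw [add_sub_cancel_left] at h
    have hinner : ⟪gradient f μhat, α • mvec hShatPsd.sqrt u⟫
        = ∑ j, (α * ∑ i, gradient f μhat i * hShatPsd.sqrt i j) * u j := by
      rw [real_inner_smul_right, inner_mvec, Finset.mul_sum]
      refine Finset.sum_congr rfl fun j _ => ?_
      ring
    have h2 : (0:ℝ) ≤ σ / 2 * ‖α • mvec hShatPsd.sqrt u‖ ^ 2 := by positivity
    linarith [hinner.ge, hinner.le]
  have hnw : ∀ u : Vec d, ‖α • mvec hShatPsd.sqrt u‖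
      ≤ |α| * matOpNorm hShatPsd.sqrt * ‖u‖ := by
    intro u
    rw [norm_smul, Real.norm_eq_abs, mul_assoc]
    exact mul_le_mul_of_nonneg_left (mvec_norm_le _ _) (abs_nonneg α)
  have hCM0 : (0:ℝ) ≤ |α| * matOpNorm hShatPsd.sqrt :=
    mul_nonneg (abs_nonneg α) (norm_nonneg _)
  have habs : ∀ u : Vec d, |f (μhat + α • mvec hShatPsd.sqrt u)|
      ≤ (|f μhat| + |f μstar|)
        + (‖gradient f μhat‖ * (|α| * matOpNorm hShatPsd.sqrt)) * ‖u‖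
        + (L * (|α| * matOpNorm hShatPsd.sqrt) ^ 2) * ‖u‖ ^ 2 := by
    intro u
    have hup := quad_upper hf hL0.le hL (μhat + α • mvec hShatPsd.sqrt u) μhat
    rw [add_sub_cancel_left] at hup
    have hlow : f μstar ≤ f (μhat + α • mvec hShatPsd.sqrt u) := hμstar _
    have hiw := real_inner_le_norm (gradient f μhat) (α • mvec hShatPsd.sqrt u)
    have hwle := hnw u
    have hw0 := norm_nonneg (α • mvec hShatPsd.sqrt u)
    have hu0 := norm_nonneg u
    have hg0 := norm_nonneg (gradient f μhat)
    have t1 : (0:ℝ) ≤ ‖gradient f μhat‖ * (|α| * matOpNorm hShatPsd.sqrt) * ‖u‖ :=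
      mul_nonneg (mul_nonneg hg0 hCM0) hu0
    have t2 : (0:ℝ) ≤ L * (|α| * matOpNorm hShatPsd.sqrt) ^ 2 * ‖u‖ ^ 2 := by positivity
    have hsq : ‖α • mvec hShatPsd.sqrt u‖ ^ 2
        ≤ (|α| * matOpNorm hShatPsd.sqrt * ‖u‖) ^ 2 := pow_le_pow_left₀ hw0 hwle 2
    have hsq2 : L * ‖α • mvec hShatPsd.sqrt u‖ ^ 2
        ≤ L * (|α| * matOpNorm hShatPsd.sqrt) ^ 2 * ‖u‖ ^ 2 := by
      have := mul_le_mul_of_nonneg_left hsq hL0.le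
      calc L * ‖α • mvec hShatPsd.sqrt u‖ ^ 2
          ≤ L * (|α| * matOpNorm hShatPsd.sqrt * ‖u‖) ^ 2 := this
        _ = L * (|α| * matOpNorm hShatPsd.sqrt) ^ 2 * ‖u‖ ^ 2 := by ring
    have hgw : ‖gradient f μhat‖ * ‖α • mvec hShatPsd.sqrt u‖
        ≤ ‖gradient f μhat‖ * (|α| * matOpNorm hShatPsd.sqrt) * ‖u‖ := by
      rw [mul_assoc]
      exact mul_le_mul_of_nonneg_left hwle hg0
    rw [abs_le]
    constructor
    · linarith [neg_abs_le (f μstar), abs_nonneg (f μhat), hlow, t1, t2]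
    · linarith [le_abs_self (f μhat), abs_nonneg (f μstar), hup, hiw, hsq2, hgw]
  have hmeasJ : AEStronglyMeasurable
      (fun u : Vec d => f (μhat + α • mvec hShatPsd.sqrt u)) (gaussD d) := by
    refine (hf.continuous.comp ?_).aestronglyMeasurable
    exact continuous_const.add ((mvec_continuous _).const_smul α)
  have hintJ : Integrable
      (fun u : Vec d => f (μhat + α • mvec hShatPsd.sqrt u)) (gaussD d) := by
    refine Integrable.mono' (((integrable_const (|f μhat| + |f μstar|)).add
      (integrable_norm_gaussD.const_mul
        (‖gradient f μhat‖ * (|α| * matOpNorm hShatPsd.sqrt)))).add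
      (integrable_normsq.const_mul (L * (|α| * matOpNorm hShatPsd.sqrt) ^ 2)))
      hmeasJ ?_
    filter_upwards with u
    rw [Real.norm_eq_abs]
    exact habs u
  have hJensen : f μhat ≤ ∫ u, f (μhat + α • mvec hShatPsd.sqrt u) ∂gaussD d := by
    have hmono := integral_mono ((integrable_const (f μhat)).add
      (integrable_linear (fun j => α * ∑ i, gradient f μhat i * hShatPsd.sqrt i j)))
      hintJ (fun u => hptJ u)
    simp only [Pi.add_apply] at hmono
    rw [integral_add (integrable_const _)
      (integrable_linear (fun j => α * ∑ i, gradient f μhat i * hShatPsd.sqrt i j)),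
      integral_const, integral_linear] at hmono
    simpa [measure_univ] using hmono
  -- determinant bounds
  obtain ⟨hsymm, hlo, hhi⟩ := hShatMem
  unfold loeLE at hlo hhi
  have hdb := det_bounds hShatPsd.1 hζinv hlo hhi
  have hS₀det : (τ⁻¹ • (1 : Mat d)).det = τ⁻¹ ^ d := det_smul_one τ⁻¹
  have hlogle : Real.log Shat.det ≤ Real.log ((τ⁻¹ • (1 : Mat d)).det) := by
    rw [hS₀det]
    exact Real.log_le_log hdb.1 hdb.2
  have hQ := hmin μstar (τ⁻¹ • (1 : Mat d)) hS₀mem hS₀psd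
  unfold Qa at hQ
  have hα2 : (0:ℝ) ≤ α ^ 2 / 2 := by positivity
  have hmul := mul_le_mul_of_nonneg_left hlogle hα2
  have key : f μhat - f μstar ≤ L * α ^ 2 * τ⁻¹ * d := by
    linarith [hJensen, hIstar, hQ, hmul]
  have keyτ : f μhat - f μstar ≤ (d:ℝ) * L * α ^ 2 / τ := by
    have heq : L * α ^ 2 * τ⁻¹ * (d:ℝ) = (d:ℝ) * L * α ^ 2 / τ := by
      field_simp
    linarith [key, heq.le, heq.ge]
  have hγ1 : (0:ℝ) ≤ γ * α ^ 3 * ((d:ℝ) + 3) ^ (3 / 2 : ℝ) / (3 * τ ^ (3 / 2 : ℝ)) := by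
    have h1 : (0:ℝ) ≤ ((d:ℝ) + 3) ^ (3 / 2 : ℝ) := Real.rpow_nonneg (by positivity) _
    have h2 : (0:ℝ) < τ ^ (3 / 2 : ℝ) := Real.rpow_pos_of_pos hτ _
    positivity
  have hγ2 : (0:ℝ) ≤ 2 * γ * α ^ 3 * ((d:ℝ) + 3) ^ (3 / 2 : ℝ)
      / (3 * σ * τ ^ (3 / 2 : ℝ)) := by
    have h1 : (0:ℝ) ≤ ((d:ℝ) + 3) ^ (3 / 2 : ℝ) := Real.rpow_nonneg (by positivity) _
    have h2 : (0:ℝ) < τ ^ (3 / 2 : ℝ) := Real.rpow_pos_of_pos hτ _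
    positivity
  have hsub : (0:ℝ) ≤ τ⁻¹ - ζ⁻¹ := by linarith
  have hlast1 : (0:ℝ) ≤ (d:ℝ) * α ^ 2 / 2 * (τ⁻¹ - ζ⁻¹) :=
    mul_nonneg (by positivity) hsub
  have hlast2 : (0:ℝ) ≤ (d:ℝ) * α ^ 2 / σ * (τ⁻¹ - ζ⁻¹) :=
    mul_nonneg (by positivity) hsub
  constructor
  · linarith
  · have hsc := hσ μhat μstar
    rw [hgrad0, inner_zero_left] at hsc
    have h3 : σ / 2 * ‖μhat - μstar‖ ^ 2 ≤ (d:ℝ) * L * α ^ 2 / τ := by linarith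
    have h4 : ‖μhat - μstar‖ ^ 2 ≤ 2 * (d:ℝ) * L * α ^ 2 / (σ * τ) := by
      rw [le_div_iff₀ (by positivity : (0:ℝ) < σ * τ)]
      have h5 := mul_le_mul_of_nonneg_right h3 hτ.le
      have h6 : (d:ℝ) * L * α ^ 2 / τ * τ = (d:ℝ) * L * α ^ 2 :=
        div_mul_cancel₀ _ (ne_of_gt hτ)
      rw [h6] at h5
      linarith [h5]
    have h5 : ‖μstar - μhat‖ ^ 2 = ‖μhat - μstar‖ ^ 2 := by rw [norm_sub_rev]
    linarith
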